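/- arXiv:1606.02640 — 2 statements merged into one kernel-verified Lean document; each statement's English description precedes it below -/
import Mathlib

section
/- Let ρ, α > 0 and let h : ℝ → ℝ be continuous with 0 ≤ h(s) ≤ ρ/2 for all s. Suppose U ∈ H¹(ℝ) is a weak solution of -U'' + αρU + h(αU²)αU = (U⁺)³, where U⁺ = max(U,0). Then U ≥ 0 almost everywhere; and if U is not identically zero, then U > 0 everywhere. -/
open MeasureTheory Real Filter

/-- If `V(x₀) < 0`, `V'(x₀) ≤ 0`, and `V'' < 0` wherever `V < 0`, then `V ≤ V(x₀)` on
`[x₀, ∞)`. -/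
lemma no_return (V V' V'' : ℝ → ℝ)
    (hd : ∀ x, HasDerivAt V (V' x) x)
    (hd' : ∀ x, HasDerivAt V' (V'' x) x)
    (hcc : ∀ x, V x < 0 → V'' x < 0)
    (x₀ : ℝ) (h0 : V x₀ < 0) (h0' : V' x₀ ≤ 0) :
    ∀ x, x₀ ≤ x → V x ≤ V x₀ := by
  have hVc : Continuous V := continuous_iff_continuousAt.mpr fun x => (hd x).continuousAt
  have hV'c : Continuous V' := continuous_iff_continuousAt.mpr fun x => (hd' x).continuousAt
  by_contra hbad
  push_neg at hbad
  obtain ⟨z, hz, hVz⟩ := hbad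
  set A : Set ℝ := {x | x₀ < x} ∩ {x | V x₀ < V x} with hA
  have hzx : x₀ < z := by
    rcases eq_or_lt_of_le hz with rfl | h
    · exact absurd hVz (lt_irrefl _)
    · exact h
  have hzA : z ∈ A := ⟨hzx, hVz⟩
  have hAopen : IsOpen A :=
    (isOpen_lt continuous_const continuous_id).inter (isOpen_lt continuous_const hVc)
  have hAne : A.Nonempty := ⟨z, hzA⟩
  have hbdd : BddBelow A := ⟨x₀, fun a ha => ha.1.le⟩
  set b := sInf A with hb
  have hbx₀ : x₀ ≤ b := le_csInf hAne fun a ha => ha.1.le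
  have hbelow : ∀ y, x₀ ≤ y → y < b → V y ≤ V x₀ := by
    intro y hy hyb
    by_contra hc
    push_neg at hc
    have hyx₀ : x₀ < y := by
      rcases eq_or_lt_of_le hy with rfl | h
      · exact absurd hc (lt_irrefl _)
      · exact h
    exact absurd (csInf_le hbdd ⟨hyx₀, hc⟩) (not_le.mpr hyb)
  have hVb : V b ≤ V x₀ := by
    rcases eq_or_lt_of_le hbx₀ with h | h
    · rw [← h]
    · have htend : Tendsto V (nhdsWithin b (Set.Iio b)) (nhds (V b)) :=
        (hVc.tendsto b).mono_left nhdsWithin_le_nhds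
      refine le_of_tendsto htend ?_
      filter_upwards [Ioo_mem_nhdsLT_of_mem (Set.mem_Ioc.mpr ⟨h, le_refl b⟩)] with y hy
      exact hbelow y hy.1.le hy.2
  have hVbneg : V b < 0 := hVb.trans_lt h0
  have hmem : {y | V y < 0} ∈ nhds b := (isOpen_lt hVc continuous_const).mem_nhds hVbneg
  obtain ⟨δ, hδ, hball⟩ := Metric.mem_nhds_iff.mp hmem
  obtain ⟨c, hbc, hcd⟩ : ∃ c, b < c ∧ c < b + δ := ⟨b + δ / 2, by linarith, by linarith⟩
  have hx₀c : x₀ < c := lt_of_le_of_lt hbx₀ hbc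
  have hVneg : ∀ y ∈ Set.Icc x₀ c, V y < 0 := by
    rintro y ⟨hy1, hy2⟩
    rcases lt_or_ge y b with hyb | hyb
    · exact (hbelow y hy1 hyb).trans_lt h0
    · apply hball
      rw [Metric.mem_ball, Real.dist_eq, abs_of_nonneg (by linarith)]
      linarith
  have hV'anti : StrictAntiOn V' (Set.Icc x₀ c) := by
    apply strictAntiOn_of_deriv_neg (convex_Icc _ _) hV'c.continuousOn
    intro x hx
    rw [interior_Icc] at hx
    rw [(hd' x).deriv]
    exact hcc x (hVneg x ⟨hx.1.le, hx.2.le⟩)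
  have hV'neg : ∀ x ∈ Set.Ioc x₀ c, V' x < 0 := by
    rintro x ⟨hx1, hx2⟩
    exact lt_of_lt_of_le (hV'anti ⟨le_refl _, hx₀c.le⟩ ⟨hx1.le, hx2⟩ hx1) h0'
  have hVanti : StrictAntiOn V (Set.Icc x₀ c) := by
    apply strictAntiOn_of_deriv_neg (convex_Icc _ _) hVc.continuousOn
    intro x hx
    rw [interior_Icc] at hx
    rw [(hd x).deriv]
    exact hV'neg x ⟨hx.1, hx.2.le⟩
  obtain ⟨a, haA, hac⟩ : ∃ a ∈ A, a < c := by
    by_contra hno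
    push_neg at hno
    have : c ≤ b := le_csInf hAne hno
    linarith
  have hax₀ : x₀ < a := haA.1
  have : V a < V x₀ := hVanti ⟨le_refl _, hx₀c.le⟩ ⟨hax₀.le, hac.le⟩ hax₀
  exact absurd haA.2 (not_lt.mpr this.le)

/-- A function in `L²` cannot be `≤ m < 0` on a set of infinite measure. -/
lemma not_L2_aux (V : ℝ → ℝ) (hV2 : MemLp V 2 volume) (m : ℝ) (hm : m < 0)
    (s : Set ℝ) (hs : MeasurableSet s) (hsvol : volume s = ⊤)
    (hbd : ∀ x ∈ s, V x ≤ m) : False := by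
  have hint : Integrable (fun x => V x ^ 2) volume := hV2.integrable_sq
  have h1 : Integrable (s.indicator fun _ => m ^ 2) volume := by
    refine hint.mono' ((measurable_const.indicator hs).aestronglyMeasurable) ?_
    refine ae_of_all _ fun x => ?_
    by_cases hx : x ∈ s
    · rw [Set.indicator_of_mem hx, Real.norm_eq_abs, abs_of_nonneg (by positivity)]
      have := hbd x hx
      nlinarith
    · rw [Set.indicator_of_notMem hx]
      simp
      positivity
  rw [integrable_indicator_iff hs] at h1
  rcases (integrableOn_const_iff (C := m ^ 2)).mp h1 with h | h
  · simp at h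
    nlinarith
  · rw [hsvol] at h
    exact absurd h (lt_irrefl _)

/-- Gronwall-type uniqueness: if `|V''| ≤ (c + V²)|V|` and `V(x₀) = V'(x₀) = 0`, then `V ≡ 0`
to the right of `x₀`. -/
lemma forward_zero (V V' V'' : ℝ → ℝ)
    (hd : ∀ x, HasDerivAt V (V' x) x) (hd' : ∀ x, HasDerivAt V' (V'' x) x)
    (c : ℝ) (hbb : ∀ x, |V'' x| ≤ (c + V x ^ 2) * |V x|)
    (x₀ : ℝ) (h0 : V x₀ = 0) (h0' : V' x₀ = 0) :
    ∀ z, x₀ ≤ z → V z = 0 := by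
  intro z hz
  have hVc : Continuous V := continuous_iff_continuousAt.mpr fun x => (hd x).continuousAt
  have hV'c : Continuous V' := continuous_iff_continuousAt.mpr fun x => (hd' x).continuousAt
  obtain ⟨M, hM⟩ := (isCompact_Icc (a := x₀) (b := z)).exists_bound_of_continuousOn
    hVc.continuousOn
  set K := max 1 (|c| + M ^ 2) with hK
  have hK1 : (1 : ℝ) ≤ K := le_max_left _ _
  set f : ℝ → ℝ × ℝ := fun t => (V t, V' t) with hf
  have hfd : ∀ t, HasDerivAt f (V' t, V'' t) t := fun t => (hd t).prodMk (hd' t)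
  have key : ∀ x ∈ Set.Icc x₀ z, ‖f x‖ ≤ gronwallBound 0 K 0 (x - x₀) := by
    apply norm_le_gronwallBound_of_norm_deriv_right_le
    · exact (hVc.prodMk hV'c).continuousOn
    · exact fun x _ => (hfd x).hasDerivWithinAt
    · simp [hf, h0, h0', Prod.norm_def]
    · intro x hx
      have hxIcc : x ∈ Set.Icc x₀ z := ⟨hx.1, hx.2.le⟩
      have hMx : |V x| ≤ M := by simpa [Real.norm_eq_abs] using hM x hxIcc
      have hM0 : 0 ≤ M := le_trans (abs_nonneg _) hMx
      have hnorm : ‖f x‖ = max |V x| |V' x| := by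
        simp [hf, Prod.norm_def, Real.norm_eq_abs]
      have hnorm' : ‖(V' x, V'' x)‖ = max |V' x| |V'' x| := by
        simp [Prod.norm_def, Real.norm_eq_abs]
      rw [hnorm', hnorm, add_zero]
      have hfx0 : 0 ≤ max |V x| |V' x| := le_trans (abs_nonneg _) (le_max_left _ _)
      apply max_le
      · calc |V' x| ≤ max |V x| |V' x| := le_max_right _ _
          _ ≤ K * max |V x| |V' x| := le_mul_of_one_le_left hfx0 hK1
      · calc |V'' x| ≤ (c + V x ^ 2) * |V x| := hbb x
          _ ≤ (|c| + M ^ 2) * |V x| := by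
              apply mul_le_mul_of_nonneg_right _ (abs_nonneg _)
              have h1 : c ≤ |c| := le_abs_self c
              have h2 : V x ^ 2 ≤ M ^ 2 := by nlinarith [abs_nonneg (V x), sq_abs (V x)]
              linarith
          _ ≤ K * |V x| := mul_le_mul_of_nonneg_right (le_max_right _ _) (abs_nonneg _)
          _ ≤ K * max |V x| |V' x| :=
            mul_le_mul_of_nonneg_left (le_max_left _ _) (le_trans zero_le_one hK1)
  have hkey := key z ⟨hz, le_refl z⟩
  rw [gronwallBound_ε0, zero_mul] at hkey
  have : |V z| ≤ 0 := by
    refine le_trans ?_ hkey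
    rw [show ‖f z‖ = max |V z| |V' z| by simp [hf, Prod.norm_def, Real.norm_eq_abs]]
    exact le_max_left _ _
  have := abs_nonneg (V z)
  have : |V z| = 0 := le_antisymm ‹|V z| ≤ 0› this
  exact abs_eq_zero.mp this

theorem positivity_of_solutions (ρ α : ℝ) (hρ : 0 < ρ) (hα : 0 < α)
    (h : ℝ → ℝ) (hh_cont : Continuous h)
    (hh_bounds : ∀ s : ℝ, 0 ≤ h s ∧ h s ≤ ρ / 2)
    (U U' U'' : ℝ → ℝ)
    (hderiv : ∀ x, HasDerivAt U (U' x) x)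
    (hderiv' : ∀ x, HasDerivAt U' (U'' x) x)
    (hU_L2 : MemLp U 2 volume) (hU'_L2 : MemLp U' 2 volume)
    (hODE : ∀ x, -(U'' x) + α * ρ * U x + h (α * (U x) ^ 2) * α * U x
      = (max (U x) 0) ^ 3) :
    (∀ᵐ x : ℝ, 0 ≤ U x) ∧
    (¬ (∀ x, U x = 0) → ∀ x, 0 < U x) := by
  -- pointwise nonnegativity
  have hcc : ∀ x, U x < 0 → U'' x < 0 := by
    intro x hx
    have hODEx := hODE x
    have hmax : max (U x) 0 = 0 := max_eq_right hx.le
    rw [hmax] at hODEx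
    have hh := hh_bounds (α * U x ^ 2)
    have h1 : h (α * U x ^ 2) * α * U x ≤ 0 :=
      mul_nonpos_of_nonneg_of_nonpos (mul_nonneg hh.1 hα.le) hx.le
    have h2 : α * ρ * U x < 0 := mul_neg_of_pos_of_neg (mul_pos hα hρ) hx
    nlinarith
  have hUpos : ∀ x, 0 ≤ U x := by
    by_contra hbad
    push_neg at hbad
    obtain ⟨x₀, hx₀⟩ := hbad
    rcases le_or_gt (U' x₀) 0 with hd0 | hd0
    · have hkey := no_return U U' U'' hderiv hderiv' hcc x₀ hx₀ hd0
      exact not_L2_aux U hU_L2 (U x₀) hx₀ (Set.Ici x₀) measurableSet_Ici Real.volume_Ici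
        fun y hy => hkey y hy
    · -- reflect
      set V : ℝ → ℝ := fun x => U (-x) with hV
      have hVd : ∀ x, HasDerivAt V (-U' (-x)) x := by
        intro x
        have := (hderiv (-x)).comp x (hasDerivAt_neg x)
        simpa [Function.comp_def, mul_comm] using this
      have hVd' : ∀ x, HasDerivAt (fun x => -U' (-x)) (U'' (-x)) x := by
        intro x
        have := ((hderiv' (-x)).comp x (hasDerivAt_neg x)).neg
        simpa [Function.comp_def, Pi.neg_def] using this
      have hkey := no_return V (fun x => -U' (-x)) (fun x => U'' (-x)) hVd hVd'
        (fun x hx => hcc (-x) hx) (-x₀) (by simpa [hV]) (by simp [hV]; linarith)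
      exact not_L2_aux U hU_L2 (U x₀) hx₀ (Set.Iic x₀) measurableSet_Iic Real.volume_Iic
        fun y hy => by simpa [hV] using hkey (-y) (by have := Set.mem_Iic.mp hy; linarith)
  refine ⟨ae_of_all _ hUpos, ?_⟩
  intro hne x
  by_contra hx
  have hUx0 : U x = 0 := le_antisymm (not_lt.mp hx) (hUpos x)
  have hmin : IsLocalMin U x := by
    apply Filter.Eventually.of_forall
    intro y
    rw [hUx0]
    exact hUpos y
  have hU'x0 : U' x = 0 := hmin.hasDerivAt_eq_zero (hderiv x)
  -- the quadratic-growth bound on U''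
  have hbb : ∀ y, |U'' y| ≤ (α * ρ + α * (ρ / 2) + U y ^ 2) * |U y| := by
    intro y
    have hODEy := hODE y
    have hmax : max (U y) 0 = U y := max_eq_left (hUpos y)
    rw [hmax] at hODEy
    have hh := hh_bounds (α * U y ^ 2)
    have hy0 : 0 ≤ U y := hUpos y
    have habs : |U y| = U y := abs_of_nonneg hy0
    rw [habs]
    rw [abs_le]
    constructor
    · nlinarith [mul_nonneg (mul_nonneg hh.1 hα.le) hy0, mul_nonneg (mul_pos hα hρ).le hy0]
    · nlinarith [mul_le_mul_of_nonneg_right (mul_le_mul_of_nonneg_right hh.2 hα.le) hy0,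
        pow_nonneg hy0 3, mul_nonneg (mul_nonneg hα.le hy0) hy0]
  have hbb' : ∀ y, |U'' y| ≤ (α * ρ + α * (ρ / 2) + U y ^ 2) * |U y| := hbb
  have hzero : ∀ y, U y = 0 := by
    intro y
    rcases le_or_gt x y with hxy | hxy
    · exact forward_zero U U' U'' hderiv hderiv' _ hbb x hUx0 hU'x0 y hxy
    · -- reflect
      have hVd : ∀ t, HasDerivAt (fun t => U (-t)) (-U' (-t)) t := by
        intro t
        have := (hderiv (-t)).comp t (hasDerivAt_neg t)
        simpa [Function.comp_def, mul_comm] using this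
      have hVd' : ∀ t, HasDerivAt (fun t => -U' (-t)) (U'' (-t)) t := by
        intro t
        have := ((hderiv' (-t)).comp t (hasDerivAt_neg t)).neg
        simpa [Function.comp_def, Pi.neg_def] using this
      have := forward_zero (fun t => U (-t)) (fun t => -U' (-t)) (fun t => U'' (-t))
        hVd hVd' (α * ρ + α * (ρ / 2)) (fun t => hbb (-t)) (-x) (by simpa)
        (by simp [hU'x0]) (-y) (by linarith)
      simpa using this
  exact hne hzero
end

section
/- Let α, ρ > 0, b > 0, and let (Uₙ) ⊂ H¹(ℝ) be a sequence with A(Uₙ) bounded and A'(Uₙ)[Uₙ] = o(‖Uₙ‖_{H¹}), where A(U) = (1/2)∫((U')²+αρU²) + (1/2)∫G(α(U⁺)²) - (1/4)∫(U⁺)⁴ and G satisfies |G(s)| ≤ c(s^{3/2}+s^{4/3}) and |g(s)s| ≤ c(s^{3/2}+s^{4/3}) with G' = g. Then, for α > 0 sufficiently small (depending only on c and ρ), the sequence (Uₙ) is bounded in H¹(ℝ). -/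
open MeasureTheory Real Filter

lemma cube_le (u : ℝ) (hu : 0 ≤ u) : u^3 ≤ u^2 + u^4 := by
  nlinarith [sq_nonneg (u^2 - u), sq_nonneg u]

lemma rpow83_le (u : ℝ) (hu : 0 ≤ u) : u ^ ((8:ℝ)/3) ≤ u^2 + u^4 := by
  rcases eq_or_lt_of_le hu with h | h
  · rw [← h, Real.zero_rpow (by norm_num)]; norm_num
  rcases le_or_gt u 1 with h1 | h1
  · have : u ^ ((8:ℝ)/3) ≤ u ^ (2:ℝ) :=
      Real.rpow_le_rpow_of_exponent_ge h h1 (by norm_num)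
    rw [Real.rpow_two] at this
    nlinarith [pow_nonneg hu 4]
  · have : u ^ ((8:ℝ)/3) ≤ u ^ ((4:ℕ):ℝ) :=
      Real.rpow_le_rpow_of_exponent_le h1.le (by norm_num)
    rw [Real.rpow_natCast] at this
    nlinarith [pow_nonneg hu 2]

lemma sq_rpow_eq (u : ℝ) (hu : 0 ≤ u) (r : ℝ) : (u^2) ^ r = u ^ (2*r) := by
  rw [← Real.rpow_natCast u 2, ← Real.rpow_mul hu]
  norm_num

lemma key_bound (α u : ℝ) (hα : 0 < α) (hu : 0 ≤ u) :
    (α*u^2) ^ ((3:ℝ)/2) + (α*u^2) ^ ((4:ℝ)/3)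
      ≤ (α ^ ((3:ℝ)/2) + α ^ ((4:ℝ)/3)) * (u^2 + u^4) := by
  have hu2 : (0:ℝ) ≤ u^2 := sq_nonneg u
  have e1 : (α*u^2) ^ ((3:ℝ)/2) = α ^ ((3:ℝ)/2) * u^3 := by
    rw [Real.mul_rpow hα.le hu2, sq_rpow_eq u hu,
      show (2:ℝ)*(3/2) = ((3:ℕ):ℝ) by norm_num, Real.rpow_natCast]
  have e2 : (α*u^2) ^ ((4:ℝ)/3) = α ^ ((4:ℝ)/3) * u ^ ((8:ℝ)/3) := by
    rw [Real.mul_rpow hα.le hu2, sq_rpow_eq u hu]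
    norm_num
  rw [e1, e2]
  have h1 := cube_le u hu
  have h2 := rpow83_le u hu
  have p1 : (0:ℝ) ≤ α ^ ((3:ℝ)/2) := Real.rpow_nonneg hα.le _
  have p2 : (0:ℝ) ≤ α ^ ((4:ℝ)/3) := Real.rpow_nonneg hα.le _
  nlinarith

lemma quad_bound (a C E N : ℝ) (ha : 0 < a) (hC : 0 ≤ C) (hE : 0 ≤ E) (hN : 0 ≤ N)
    (h : a*N ≤ C + E*Real.sqrt N) : N ≤ max 1 (((C+E)/a)^2) := by
  rcases le_or_gt N 1 with h1 | h1
  · exact le_trans h1 (le_max_left _ _)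
  · have hs1 : 1 ≤ Real.sqrt N := by
      rw [show (1:ℝ) = Real.sqrt 1 by simp]
      exact Real.sqrt_le_sqrt h1.le
    have hss : Real.sqrt N * Real.sqrt N = N := Real.mul_self_sqrt hN
    have hsle : a * Real.sqrt N ≤ C + E := by nlinarith [Real.sqrt_nonneg N]
    have hd : Real.sqrt N ≤ (C+E)/a := by
      rw [le_div_iff₀ ha]; linarith [mul_comm a (Real.sqrt N)]
    refine le_trans ?_ (le_max_right _ _)
    calc N = Real.sqrt N * Real.sqrt N := hss.symm
    _ ≤ ((C+E)/a)^2 := by nlinarith [Real.sqrt_nonneg N]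

set_option maxHeartbeats 1000000 in
theorem palais_smale_bounded (ρ b c : ℝ) (hρ : 0 < ρ) (hb : 0 < b) (hc : 0 < c)
    (g G : ℝ → ℝ)
    (hG' : ∀ s : ℝ, 0 ≤ s → HasDerivAt G (g s) s)
    (hGbound : ∀ s : ℝ, 0 ≤ s → |G s| ≤ c * (s ^ ((3 : ℝ)/2) + s ^ ((4 : ℝ)/3)))
    (hgbound : ∀ s : ℝ, 0 ≤ s → |g s * s| ≤ c * (s ^ ((3 : ℝ)/2) + s ^ ((4 : ℝ)/3))) :
    ∃ α₀ > (0 : ℝ), ∀ α : ℝ, 0 < α → α ≤ α₀ →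
      ∀ (U U' : ℕ → ℝ → ℝ) (AU A'U ε : ℕ → ℝ),
        (∀ n x, HasDerivAt (U n) (U' n x) x) →
        (∀ n, Integrable (fun x => (U' n x) ^ 2) volume) →
        (∀ n, Integrable (fun x => (U n x) ^ 2) volume) →
        (∀ n, Integrable (fun x => (max (U n x) 0) ^ 4) volume) →
        (∀ n, Integrable (fun x => G (α * (max (U n x) 0) ^ 2)) volume) →
        (∀ n, Integrable
          (fun x => g (α * (max (U n x) 0) ^ 2) * (α * (max (U n x) 0) ^ 2)) volume) →
        -- the values of the action functional A along the sequence
        (∀ n, AU n = 1/2 * (∫ x : ℝ, ((U' n x) ^ 2 + α * ρ * (U n x) ^ 2))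
          + 1/2 * (∫ x : ℝ, G (α * (max (U n x) 0) ^ 2))
          - 1/4 * ∫ x : ℝ, (max (U n x) 0) ^ 4) →
        -- the values A'(Uₙ)[Uₙ]
        (∀ n, A'U n = (∫ x : ℝ, ((U' n x) ^ 2 + α * ρ * (U n x) ^ 2))
          + (∫ x : ℝ, g (α * (max (U n x) 0) ^ 2) * (α * (max (U n x) 0) ^ 2))
          - ∫ x : ℝ, (max (U n x) 0) ^ 4) →
        -- A(Uₙ) is bounded
        (∃ C : ℝ, ∀ n, |AU n| ≤ C) →
        -- A'(Uₙ)[Uₙ] = o(‖Uₙ‖_{H¹})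
        Tendsto ε atTop (nhds 0) →
        (∀ n, |A'U n| ≤ ε n *
          Real.sqrt ((∫ x : ℝ, (U' n x) ^ 2) + ∫ x : ℝ, (U n x) ^ 2)) →
        -- conclusion: the sequence is bounded in H¹(ℝ)
        ∃ M : ℝ, ∀ n, (∫ x : ℝ, (U' n x) ^ 2) + (∫ x : ℝ, (U n x) ^ 2) ≤ M := by
  refine ⟨min (min 1 (1/ρ)) (min ((ρ/(32*c))^3) (1/(32*c))), by positivity, ?_⟩
  intro α hα hα0 U U' AU A'U ε hU hIntU' hIntU2 hIntu4 hIntG hIntg hAU hA'U hAbd hε hA'bd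
  -- basic consequences of α ≤ α₀
  have hα1 : α ≤ 1 := hα0.trans (le_trans (min_le_left _ _) (min_le_left _ _))
  have hαρ1 : α * ρ ≤ 1 := by
    have h2 : α ≤ 1/ρ := hα0.trans (le_trans (min_le_left _ _) (min_le_right _ _))
    rw [le_div_iff₀ hρ] at h2; linarith
  have hαc1 : α ≤ (ρ/(32*c))^3 := hα0.trans (le_trans (min_le_right _ _) (min_le_left _ _))
  have hαc2 : α ≤ 1/(32*c) := hα0.trans (le_trans (min_le_right _ _) (min_le_right _ _))
  -- the key constant
  have h3243 : α ^ ((3:ℝ)/2) ≤ α ^ ((4:ℝ)/3) :=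
    Real.rpow_le_rpow_of_exponent_ge hα hα1 (by norm_num)
  have h13 : α ^ ((1:ℝ)/3) ≤ ρ/(32*c) := by
    have h := Real.rpow_le_rpow hα.le hαc1 (by norm_num : (0:ℝ) ≤ 1/3)
    rwa [← Real.rpow_natCast (ρ/(32*c)) 3, ← Real.rpow_mul (by positivity),
      show ((3:ℕ):ℝ) * (1/3) = 1 by norm_num, Real.rpow_one] at h
  have h43split : α ^ ((4:ℝ)/3) = α ^ ((1:ℝ)/3) * α := by
    rw [show (4:ℝ)/3 = 1/3 + 1 by norm_num, Real.rpow_add hα, Real.rpow_one]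
  have h43le : α ^ ((4:ℝ)/3) ≤ α := by
    have := Real.rpow_le_rpow_of_exponent_ge hα hα1 (by norm_num : (1:ℝ) ≤ 4/3)
    rwa [Real.rpow_one] at this
  have hK1 : c * (α ^ ((3:ℝ)/2) + α ^ ((4:ℝ)/3)) ≤ α * ρ / 16 := by
    have h1 : c * (α ^ ((3:ℝ)/2) + α ^ ((4:ℝ)/3)) ≤ 2 * c * (α ^ ((1:ℝ)/3) * α) := by
      rw [← h43split]; nlinarith
    have h2 : 2 * c * (α ^ ((1:ℝ)/3) * α) ≤ 2 * c * ((ρ/(32*c)) * α) := by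
      have := mul_le_mul_of_nonneg_right h13 hα.le
      nlinarith
    have h3 : 2 * c * ((ρ/(32*c)) * α) = α * ρ / 16 := by field_simp; ring
    linarith
  have hK2 : c * (α ^ ((3:ℝ)/2) + α ^ ((4:ℝ)/3)) ≤ 1 / 16 := by
    have h1 : c * (α ^ ((3:ℝ)/2) + α ^ ((4:ℝ)/3)) ≤ 2 * c * α := by nlinarith
    have h2 : 2 * c * α ≤ 2 * c * (1/(32*c)) := by nlinarith
    have h3 : 2 * c * (1/(32*c)) = 1/16 := by field_simp; ring
    linarith
  have hK0 : 0 ≤ c * (α ^ ((3:ℝ)/2) + α ^ ((4:ℝ)/3)) := by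
    have := Real.rpow_nonneg hα.le ((3:ℝ)/2)
    have := Real.rpow_nonneg hα.le ((4:ℝ)/3)
    positivity
  -- bounds on AU and ε
  obtain ⟨C, hC⟩ := hAbd
  have hC0 : 0 ≤ C := le_trans (abs_nonneg _) (hC 0)
  obtain ⟨E₀, hE₀⟩ := hε.bddAbove_range
  set E : ℝ := max E₀ 0 with hEdef
  have hEb : ∀ n, ε n ≤ E := fun n =>
    le_trans (hE₀ ⟨n, rfl⟩) (le_max_left _ _)
  have hE0 : 0 ≤ E := le_max_right _ _
  set a : ℝ := α * ρ / 16 with hadef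
  have ha : 0 < a := by positivity
  refine ⟨max 1 (((C+E)/a)^2), fun n => ?_⟩
  -- notation
  set I1 : ℝ := ∫ x : ℝ, (U' n x) ^ 2 with hI1def
  set I2 : ℝ := ∫ x : ℝ, (U n x) ^ 2 with hI2def
  have hI1 : 0 ≤ I1 := integral_nonneg fun x => sq_nonneg _
  have hI2 : 0 ≤ I2 := integral_nonneg fun x => sq_nonneg _
  have ht0 : 0 ≤ ∫ x : ℝ, (max (U n x) 0) ^ 4 :=
    integral_nonneg fun x => by positivity
  -- measurability / integrability of (U⁺)²
  have hUc : Continuous (U n) :=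
    continuous_iff_continuousAt.2 fun x => (hU n x).differentiableAt.continuousAt
  have humeas : AEStronglyMeasurable (fun x => (max (U n x) 0) ^ 2) volume :=
    ((hUc.max continuous_const).pow 2).aestronglyMeasurable
  have hmaxsq : ∀ x : ℝ, (max (U n x) 0) ^ 2 ≤ (U n x) ^ 2 := by
    intro x
    rcases le_or_gt (U n x) 0 with h | h
    · rw [max_eq_right h]; simpa using sq_nonneg (U n x)
    · rw [max_eq_left h.le]
  have hIu2 : Integrable (fun x => (max (U n x) 0) ^ 2) volume := by
    refine (hIntU2 n).mono humeas (ae_of_all _ fun x => ?_)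
    rw [Real.norm_eq_abs, Real.norm_eq_abs, abs_of_nonneg (sq_nonneg _),
      abs_of_nonneg (sq_nonneg _)]
    exact hmaxsq x
  have hu2le : (∫ x : ℝ, (max (U n x) 0) ^ 2) ≤ I2 :=
    integral_mono hIu2 (hIntU2 n) hmaxsq
  have hu20 : 0 ≤ ∫ x : ℝ, (max (U n x) 0) ^ 2 :=
    integral_nonneg fun x => sq_nonneg _
  -- splitting the quadratic integral
  have hq : (∫ x : ℝ, ((U' n x) ^ 2 + α * ρ * (U n x) ^ 2)) = I1 + α * ρ * I2 := by
    rw [integral_add (hIntU' n) ((hIntU2 n).const_mul (α*ρ)), integral_const_mul (α*ρ)]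
  -- bounds on the nonlinear integrals
  set K : ℝ := c * (α ^ ((3:ℝ)/2) + α ^ ((4:ℝ)/3)) with hKdef
  have hptG : ∀ x : ℝ, |G (α * (max (U n x) 0) ^ 2)|
      ≤ K * ((max (U n x) 0) ^ 2 + (max (U n x) 0) ^ 4) := by
    intro x
    have hs : 0 ≤ α * (max (U n x) 0) ^ 2 := by positivity
    calc |G (α * (max (U n x) 0) ^ 2)|
        ≤ c * ((α * (max (U n x) 0) ^ 2) ^ ((3:ℝ)/2)
            + (α * (max (U n x) 0) ^ 2) ^ ((4:ℝ)/3)) := hGbound _ hs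
      _ ≤ c * ((α ^ ((3:ℝ)/2) + α ^ ((4:ℝ)/3))
            * ((max (U n x) 0) ^ 2 + (max (U n x) 0) ^ 4)) :=
          mul_le_mul_of_nonneg_left
            (key_bound α (max (U n x) 0) hα (le_max_right _ _)) hc.le
      _ = K * ((max (U n x) 0) ^ 2 + (max (U n x) 0) ^ 4) := by
          rw [hKdef, mul_assoc]
  have hptg : ∀ x : ℝ, |g (α * (max (U n x) 0) ^ 2) * (α * (max (U n x) 0) ^ 2)|
      ≤ K * ((max (U n x) 0) ^ 2 + (max (U n x) 0) ^ 4) := by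
    intro x
    have hs : 0 ≤ α * (max (U n x) 0) ^ 2 := by positivity
    calc |g (α * (max (U n x) 0) ^ 2) * (α * (max (U n x) 0) ^ 2)|
        ≤ c * ((α * (max (U n x) 0) ^ 2) ^ ((3:ℝ)/2)
            + (α * (max (U n x) 0) ^ 2) ^ ((4:ℝ)/3)) := hgbound _ hs
      _ ≤ c * ((α ^ ((3:ℝ)/2) + α ^ ((4:ℝ)/3))
            * ((max (U n x) 0) ^ 2 + (max (U n x) 0) ^ 4)) :=
          mul_le_mul_of_nonneg_left
            (key_bound α (max (U n x) 0) hα (le_max_right _ _)) hc.le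
      _ = K * ((max (U n x) 0) ^ 2 + (max (U n x) 0) ^ 4) := by
          rw [hKdef, mul_assoc]
  have hbint : Integrable
      (fun x => K * ((max (U n x) 0) ^ 2 + (max (U n x) 0) ^ 4)) volume :=
    (hIu2.add (hIntu4 n)).const_mul K
  have hbval : (∫ x : ℝ, K * ((max (U n x) 0) ^ 2 + (max (U n x) 0) ^ 4))
      = K * ((∫ x : ℝ, (max (U n x) 0) ^ 2) + ∫ x : ℝ, (max (U n x) 0) ^ 4) := by
    rw [integral_const_mul K, integral_add hIu2 (hIntu4 n)]
  have hIGb : |∫ x : ℝ, G (α * (max (U n x) 0) ^ 2)|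
      ≤ K * (I2 + ∫ x : ℝ, (max (U n x) 0) ^ 4) := by
    calc |∫ x : ℝ, G (α * (max (U n x) 0) ^ 2)|
        ≤ ∫ x : ℝ, |G (α * (max (U n x) 0) ^ 2)| := by
          simpa [Real.norm_eq_abs] using
            norm_integral_le_integral_norm (fun x : ℝ => G (α * (max (U n x) 0) ^ 2))
      _ ≤ ∫ x : ℝ, K * ((max (U n x) 0) ^ 2 + (max (U n x) 0) ^ 4) :=
          integral_mono (hIntG n).abs hbint hptG
      _ = K * ((∫ x : ℝ, (max (U n x) 0) ^ 2) + ∫ x : ℝ, (max (U n x) 0) ^ 4) := hbval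
      _ ≤ K * (I2 + ∫ x : ℝ, (max (U n x) 0) ^ 4) :=
          mul_le_mul_of_nonneg_left (add_le_add_left hu2le _) hK0
  have hIgb : |∫ x : ℝ, g (α * (max (U n x) 0) ^ 2) * (α * (max (U n x) 0) ^ 2)|
      ≤ K * (I2 + ∫ x : ℝ, (max (U n x) 0) ^ 4) := by
    calc |∫ x : ℝ, g (α * (max (U n x) 0) ^ 2) * (α * (max (U n x) 0) ^ 2)|
        ≤ ∫ x : ℝ, |g (α * (max (U n x) 0) ^ 2) * (α * (max (U n x) 0) ^ 2)| := by
          simpa only [Real.norm_eq_abs] using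
            norm_integral_le_integral_norm
              (fun x : ℝ => g (α * (max (U n x) 0) ^ 2) * (α * (max (U n x) 0) ^ 2))
      _ ≤ ∫ x : ℝ, K * ((max (U n x) 0) ^ 2 + (max (U n x) 0) ^ 4) :=
          integral_mono (hIntg n).abs hbint hptg
      _ = K * ((∫ x : ℝ, (max (U n x) 0) ^ 2) + ∫ x : ℝ, (max (U n x) 0) ^ 4) := hbval
      _ ≤ K * (I2 + ∫ x : ℝ, (max (U n x) 0) ^ 4) :=
          mul_le_mul_of_nonneg_left (add_le_add_left hu2le _) hK0
  -- combine
  set t : ℝ := ∫ x : ℝ, (max (U n x) 0) ^ 4 with htdef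
  set IG : ℝ := ∫ x : ℝ, G (α * (max (U n x) 0) ^ 2) with hIGdef
  set Ig : ℝ := ∫ x : ℝ, g (α * (max (U n x) 0) ^ 2) * (α * (max (U n x) 0) ^ 2)
    with hIgdef
  have hcomb : (1/8) * (I1 + α * ρ * I2) + (1/8) * t
      = AU n - (3/8) * A'U n - (1/2) * IG + (3/8) * Ig := by
    rw [hAU n, hA'U n, hq]; ring
  have hsq0 : 0 ≤ Real.sqrt (I1 + I2) := Real.sqrt_nonneg _
  have hεE : ε n * Real.sqrt (I1 + I2) ≤ E * Real.sqrt (I1 + I2) :=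
    mul_le_mul_of_nonneg_right (hEb n) hsq0
  have hA'b : |A'U n| ≤ E * Real.sqrt (I1 + I2) := le_trans (hA'bd n) hεE
  have hKt : K * t ≤ (1/16) * t := mul_le_mul_of_nonneg_right hK2 ht0
  have hKI2 : K * I2 ≤ (α * ρ / 16) * I2 := mul_le_mul_of_nonneg_right hK1 hI2
  have hαρI1 : α * ρ * I1 ≤ 1 * I1 := mul_le_mul_of_nonneg_right hαρ1 hI1
  have hmain : a * (I1 + I2) ≤ C + E * Real.sqrt (I1 + I2) := by
    have h1 : AU n ≤ C := le_trans (le_abs_self _) (hC n)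
    have h2 : -A'U n ≤ E * Real.sqrt (I1 + I2) := le_trans (neg_le_abs _) hA'b
    have h3 : -IG ≤ K * (I2 + t) := le_trans (neg_le_abs _) hIGb
    have h4 : Ig ≤ K * (I2 + t) := le_trans (le_abs_self _) hIgb
    have h5 : 0 ≤ α * ρ * I2 := mul_nonneg (mul_nonneg hα.le hρ.le) hI2
    have h6 : 0 ≤ E * Real.sqrt (I1 + I2) := mul_nonneg hE0 hsq0
    rw [hadef]
    linarith [hcomb, hKt, hKI2, hαρI1, ht0]
  have := quad_bound a C E (I1 + I2) ha hC0 hE0 (by linarith) hmain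
  simpa [hadef] using this
end
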